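/- Conjunctive nested regular path queries are not expressible in nested regular path queries: there exist two nre-triple patterns whose conjunction cannot be expressed by any single nre-triple pattern. Concretely, there is no nested regular expression e such that for all RDF graphs G, ⟦(?x, e, ?y)⟧_G = ⟦(?x, next, ?y) ∧ (?x, next/next, ?y)⟧_G, where the latter denotes the set of mappings μ with (μ(?x), μ(?y)) ∈ ⟦next⟧_G ∩ ⟦next/next⟧_G. -/

import Mathlib

/-- Navigation axes for nested regular expressions. -/
inductive Axis where
  | self | next | edge | node | nextInv | edgeInv | nodeInv
deriving DecidableEq

/-- Nested regular expressions over a universe `U` of constants. -/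
inductive NRE (U : Type) where
  | axis : Axis → NRE U
  | axisC : Axis → U → NRE U
  | nest : Axis → NRE U → NRE U
  | comp : NRE U → NRE U → NRE U
  | union : NRE U → NRE U → NRE U
  | star : NRE U → NRE U

variable {U : Type}

/-- Active domain of an RDF graph. -/
def adom (G : Set (U × U × U)) : Set U :=
  {c | ∃ t ∈ G, c = t.1 ∨ c = t.2.1 ∨ c = t.2.2}

/-- Relational composition. -/
def rcomp (R S : Set (U × U)) : Set (U × U) :=
  {p | ∃ c, (p.1, c) ∈ R ∧ (c, p.2) ∈ S}

/-- Evaluation of a bare axis on an RDF graph. -/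
def axisFwd (G : Set (U × U × U)) : Axis → Set (U × U)
  | .self => {p | p.1 = p.2 ∧ p.1 ∈ adom G}
  | .next => {p | ∃ c, (p.1, c, p.2) ∈ G}
  | .edge => {p | ∃ c, (p.1, p.2, c) ∈ G}
  | .node => {p | ∃ c, (c, p.1, p.2) ∈ G}
  | .nextInv => {p | ∃ c, (p.2, c, p.1) ∈ G}
  | .edgeInv => {p | ∃ c, (p.2, p.1, c) ∈ G}
  | .nodeInv => {p | ∃ c, (c, p.2, p.1) ∈ G}

/-- Evaluation of `axis::c` on an RDF graph. -/
def axisCEval (G : Set (U × U × U)) : Axis → U → Set (U × U)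
  | .self, c => {p | p.1 = p.2 ∧ p.1 = c ∧ c ∈ adom G}
  | .next, c => {p | (p.1, c, p.2) ∈ G}
  | .edge, c => {p | (p.1, p.2, c) ∈ G}
  | .node, c => {p | (c, p.1, p.2) ∈ G}
  | .nextInv, c => {p | (p.2, c, p.1) ∈ G}
  | .edgeInv, c => {p | (p.2, p.1, c) ∈ G}
  | .nodeInv, c => {p | (c, p.2, p.1) ∈ G}

/-- Evaluation of a nested regular expression on an RDF graph. -/
def NRE.eval (G : Set (U × U × U)) : NRE U → Set (U × U)
  | .axis a => axisFwd G a
  | .axisC a c => axisCEval G a c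
  | .nest .self e => {p | p.1 = p.2 ∧ ∃ c, (p.1, c) ∈ e.eval G}
  | .nest a e => {p | ∃ c d, p ∈ axisCEval G a c ∧ (c, d) ∈ e.eval G}
  | .comp e1 e2 => rcomp (e1.eval G) (e2.eval G)
  | .union e1 e2 => e1.eval G ∪ e2.eval G
  | .star e => {p | p.1 = p.2 ∧ p.1 ∈ adom G} ∪
      {p | Relation.TransGen (fun a b => (a, b) ∈ e.eval G) p.1 p.2}

/-- The two query variables ?x and ?y. -/
inductive QVar where
  | x | y
deriving DecidableEq

/-- Constants occurring in a nested regular expression. -/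
def NRE.consts : NRE U → List U
  | .axis _ => []
  | .axisC _ c => [c]
  | .nest _ e => e.consts
  | .comp e1 e2 => e1.consts ++ e2.consts
  | .union e1 e2 => e1.consts ++ e2.consts
  | .star e => e.consts

lemma adom_of_mem {G : Set (U × U × U)} {u c v : U} (h : (u, c, v) ∈ G) :
    u ∈ adom G ∧ c ∈ adom G ∧ v ∈ adom G :=
  ⟨⟨(u, c, v), h, Or.inl rfl⟩, ⟨(u, c, v), h, Or.inr (Or.inl rfl)⟩,
    ⟨(u, c, v), h, Or.inr (Or.inr rfl)⟩⟩

lemma lift_trans {R1 R2 : U → U → Prop} {h : U → U} {A : Set U}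
    (step : ∀ x2 ∈ A, ∀ w1, R1 (h x2) w1 → ∃ v2 ∈ A, h v2 = w1 ∧ R2 x2 v2) :
    ∀ u v1, Relation.TransGen R1 u v1 → ∀ x2 ∈ A, h x2 = u →
      ∃ v2 ∈ A, h v2 = v1 ∧ Relation.TransGen R2 x2 v2 := by
  intro u v1 hT
  induction hT using Relation.TransGen.head_induction_on with
  | single h1 =>
    intro x2 hx2 he
    obtain ⟨v2, hv2, he2, hr⟩ := step x2 hx2 _ (he ▸ h1)
    exact ⟨v2, hv2, he2, .single hr⟩
  | head h1 _ IH =>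
    intro x2 hx2 he
    obtain ⟨c2, hc2, hec, hr⟩ := step x2 hx2 _ (he ▸ h1)
    obtain ⟨v2, hv2, hev, ht⟩ := IH c2 hc2 hec
    exact ⟨v2, hv2, hev, .head hr ht⟩

lemma lift_eval {G1 G2 : Set (U × U × U)} {h : U → U}
    (Hback : ∀ x2 ∈ adom G2, ∀ u c v : U, (u, c, v) ∈ G1 →
      (h x2 = u → ∃ c2 v2, (x2, c2, v2) ∈ G2 ∧ h c2 = c ∧ h v2 = v) ∧
      (h x2 = c → ∃ u2 v2, (u2, x2, v2) ∈ G2 ∧ h u2 = u ∧ h v2 = v) ∧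
      (h x2 = v → ∃ u2 c2, (u2, c2, x2) ∈ G2 ∧ h u2 = u ∧ h c2 = c)) :
    ∀ e : NRE U, (∀ c ∈ e.consts, c ∉ adom G1) →
      ∀ x2 ∈ adom G2, ∀ v1, (h x2, v1) ∈ e.eval G1 →
        ∃ v2 ∈ adom G2, h v2 = v1 ∧ (x2, v2) ∈ e.eval G2 := by
  intro e
  induction e with
  | axis a =>
    intro _ x2 hx2 v1 hv1
    cases a <;> simp only [NRE.eval, axisFwd, Set.mem_setOf_eq] at hv1 ⊢
    · exact ⟨x2, hx2, hv1.1, rfl, hx2⟩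
    · obtain ⟨c1, ht⟩ := hv1
      obtain ⟨c2, v2, ht2, hc2, hv2⟩ := (Hback x2 hx2 _ _ _ ht).1 rfl
      exact ⟨v2, (adom_of_mem ht2).2.2, hv2, c2, ht2⟩
    · obtain ⟨c1, ht⟩ := hv1
      obtain ⟨c2, v2, ht2, hc2, hv2⟩ := (Hback x2 hx2 _ _ _ ht).1 rfl
      exact ⟨c2, (adom_of_mem ht2).2.1, hc2, v2, ht2⟩
    · obtain ⟨c1, ht⟩ := hv1
      obtain ⟨u2, v2, ht2, hu2, hv2⟩ := (Hback x2 hx2 _ _ _ ht).2.1 rfl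
      exact ⟨v2, (adom_of_mem ht2).2.2, hv2, u2, ht2⟩
    · obtain ⟨c1, ht⟩ := hv1
      obtain ⟨u2, c2, ht2, hu2, hc2⟩ := (Hback x2 hx2 _ _ _ ht).2.2 rfl
      exact ⟨u2, (adom_of_mem ht2).1, hu2, c2, ht2⟩
    · obtain ⟨c1, ht⟩ := hv1
      obtain ⟨u2, v2, ht2, hu2, hv2⟩ := (Hback x2 hx2 _ _ _ ht).2.1 rfl
      exact ⟨u2, (adom_of_mem ht2).1, hu2, v2, ht2⟩
    · obtain ⟨c1, ht⟩ := hv1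
      obtain ⟨u2, c2, ht2, hu2, hc2⟩ := (Hback x2 hx2 _ _ _ ht).2.2 rfl
      exact ⟨c2, (adom_of_mem ht2).2.1, hc2, u2, ht2⟩
  | axisC a c =>
    intro hcs x2 hx2 v1 hv1
    have hc : c ∉ adom G1 := hcs c (by simp [NRE.consts])
    exfalso
    cases a <;> simp only [NRE.eval, axisCEval, Set.mem_setOf_eq] at hv1
    · exact hc hv1.2.2
    · exact hc (adom_of_mem hv1).2.1
    · exact hc (adom_of_mem hv1).2.2
    · exact hc (adom_of_mem hv1).1
    · exact hc (adom_of_mem hv1).2.1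
    · exact hc (adom_of_mem hv1).2.2
    · exact hc (adom_of_mem hv1).1
  | nest a e IH =>
    intro hcs x2 hx2 v1 hv1
    have hcs' : ∀ c ∈ e.consts, c ∉ adom G1 := fun c hc => hcs c (by simpa [NRE.consts] using hc)
    cases a <;> simp only [NRE.eval, axisCEval, Set.mem_setOf_eq] at hv1 ⊢
    · obtain ⟨heq, c1, hc1⟩ := hv1
      obtain ⟨c2, _, _, hc2⟩ := IH hcs' x2 hx2 c1 hc1
      exact ⟨x2, hx2, heq, rfl, c2, hc2⟩
    · obtain ⟨c1, d1, ht, hd1⟩ := hv1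
      obtain ⟨c2, v2, ht2, hc2, hv2⟩ := (Hback x2 hx2 _ _ _ ht).1 rfl
      obtain ⟨d2, _, _, hd2⟩ := IH hcs' c2 (adom_of_mem ht2).2.1 d1 (hc2 ▸ hd1)
      exact ⟨v2, (adom_of_mem ht2).2.2, hv2, c2, d2, ht2, hd2⟩
    · obtain ⟨c1, d1, ht, hd1⟩ := hv1
      obtain ⟨c2, v2, ht2, hc2, hv2⟩ := (Hback x2 hx2 _ _ _ ht).1 rfl
      obtain ⟨d2, _, _, hd2⟩ := IH hcs' v2 (adom_of_mem ht2).2.2 d1 (hv2 ▸ hd1)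
      exact ⟨c2, (adom_of_mem ht2).2.1, hc2, v2, d2, ht2, hd2⟩
    · obtain ⟨c1, d1, ht, hd1⟩ := hv1
      obtain ⟨u2, v2, ht2, hu2, hv2⟩ := (Hback x2 hx2 _ _ _ ht).2.1 rfl
      obtain ⟨d2, _, _, hd2⟩ := IH hcs' u2 (adom_of_mem ht2).1 d1 (hu2 ▸ hd1)
      exact ⟨v2, (adom_of_mem ht2).2.2, hv2, u2, d2, ht2, hd2⟩
    · obtain ⟨c1, d1, ht, hd1⟩ := hv1
      obtain ⟨u2, c2, ht2, hu2, hc2⟩ := (Hback x2 hx2 _ _ _ ht).2.2 rfl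
      obtain ⟨d2, _, _, hd2⟩ := IH hcs' c2 (adom_of_mem ht2).2.1 d1 (hc2 ▸ hd1)
      exact ⟨u2, (adom_of_mem ht2).1, hu2, c2, d2, ht2, hd2⟩
    · obtain ⟨c1, d1, ht, hd1⟩ := hv1
      obtain ⟨u2, v2, ht2, hu2, hv2⟩ := (Hback x2 hx2 _ _ _ ht).2.1 rfl
      obtain ⟨d2, _, _, hd2⟩ := IH hcs' v2 (adom_of_mem ht2).2.2 d1 (hv2 ▸ hd1)
      exact ⟨u2, (adom_of_mem ht2).1, hu2, v2, d2, ht2, hd2⟩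
    · obtain ⟨c1, d1, ht, hd1⟩ := hv1
      obtain ⟨u2, c2, ht2, hu2, hc2⟩ := (Hback x2 hx2 _ _ _ ht).2.2 rfl
      obtain ⟨d2, _, _, hd2⟩ := IH hcs' u2 (adom_of_mem ht2).1 d1 (hu2 ▸ hd1)
      exact ⟨c2, (adom_of_mem ht2).2.1, hc2, u2, d2, ht2, hd2⟩
  | comp e1 e2 IH1 IH2 =>
    intro hcs x2 hx2 v1 hv1
    have hcs1 : ∀ c ∈ e1.consts, c ∉ adom G1 := fun c hc => hcs c (by simp [NRE.consts, hc])
    have hcs2 : ∀ c ∈ e2.consts, c ∉ adom G1 := fun c hc => hcs c (by simp [NRE.consts, hc])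
    obtain ⟨c1, h1, h2⟩ := hv1
    obtain ⟨c2, hc2a, hc2, hm1⟩ := IH1 hcs1 x2 hx2 c1 h1
    obtain ⟨v2, hv2a, hv2, hm2⟩ := IH2 hcs2 c2 hc2a v1 (hc2 ▸ h2)
    exact ⟨v2, hv2a, hv2, c2, hm1, hm2⟩
  | union e1 e2 IH1 IH2 =>
    intro hcs x2 hx2 v1 hv1
    have hcs1 : ∀ c ∈ e1.consts, c ∉ adom G1 := fun c hc => hcs c (by simp [NRE.consts, hc])
    have hcs2 : ∀ c ∈ e2.consts, c ∉ adom G1 := fun c hc => hcs c (by simp [NRE.consts, hc])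
    rcases hv1 with h1 | h1
    · obtain ⟨v2, hv2a, hv2, hm⟩ := IH1 hcs1 x2 hx2 v1 h1
      exact ⟨v2, hv2a, hv2, Or.inl hm⟩
    · obtain ⟨v2, hv2a, hv2, hm⟩ := IH2 hcs2 x2 hx2 v1 h1
      exact ⟨v2, hv2a, hv2, Or.inr hm⟩
  | star e IH =>
    intro hcs x2 hx2 v1 hv1
    have hcs' : ∀ c ∈ e.consts, c ∉ adom G1 := fun c hc => hcs c (by simpa [NRE.consts] using hc)
    rcases hv1 with ⟨heq, _⟩ | hT
    · exact ⟨x2, hx2, heq, Or.inl ⟨rfl, hx2⟩⟩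
    · obtain ⟨v2, hv2a, hv2, ht⟩ :=
        lift_trans (fun y2 hy2 w1 hw1 => IH hcs' y2 hy2 w1 hw1) _ _ hT x2 hx2 rfl
      exact ⟨v2, hv2a, hv2, Or.inr ht⟩

/-- The triangle graph: a direct edge and a 2-path from `n 0` to `n 2`. -/
def G1set (n : ℕ → U) : Set (U × U × U) :=
  {(n 0, n 9, n 2), (n 0, n 10, n 1), (n 1, n 11, n 2)}

/-- The hexagon: a double cover of the triangle. -/
def G2set (n : ℕ → U) : Set (U × U × U) :=
  {(n 3, n 9, n 7), (n 3, n 10, n 5), (n 5, n 11, n 8),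
   (n 4, n 9, n 8), (n 4, n 10, n 6), (n 6, n 11, n 7)}

open Classical in
/-- The covering map from the hexagon to the triangle. -/
noncomputable def hmap (n : ℕ → U) : U → U := fun x =>
  if x = n 3 ∨ x = n 4 then n 0
  else if x = n 5 ∨ x = n 6 then n 1
  else if x = n 7 ∨ x = n 8 then n 2
  else x

lemma hmap_vals {n : ℕ → U} (hninj : Function.Injective n) :
    hmap n (n 3) = n 0 ∧ hmap n (n 4) = n 0 ∧ hmap n (n 5) = n 1 ∧ hmap n (n 6) = n 1 ∧
    hmap n (n 7) = n 2 ∧ hmap n (n 8) = n 2 ∧ hmap n (n 9) = n 9 ∧ hmap n (n 10) = n 10 ∧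
    hmap n (n 11) = n 11 := by
  refine ⟨?_, ?_, ?_, ?_, ?_, ?_, ?_, ?_, ?_⟩ <;> simp [hmap, hninj.eq_iff]

lemma adomG1_sub (n : ℕ → U) {x : U} (hx : x ∈ adom (G1set n)) :
    x = n 0 ∨ x = n 1 ∨ x = n 2 ∨ x = n 9 ∨ x = n 10 ∨ x = n 11 := by
  obtain ⟨t, ht, hp⟩ := hx
  simp only [G1set, Set.mem_insert_iff, Set.mem_singleton_iff] at ht
  rcases ht with rfl | rfl | rfl <;> simp only at hp <;> tauto

lemma adomG2_sub (n : ℕ → U) {x : U} (hx : x ∈ adom (G2set n)) :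
    x = n 3 ∨ x = n 4 ∨ x = n 5 ∨ x = n 6 ∨ x = n 7 ∨ x = n 8 ∨
      x = n 9 ∨ x = n 10 ∨ x = n 11 := by
  obtain ⟨t, ht, hp⟩ := hx
  simp only [G2set, Set.mem_insert_iff, Set.mem_singleton_iff] at ht
  rcases ht with rfl | rfl | rfl | rfl | rfl | rfl <;> simp only at hp <;> tauto

lemma back {n : ℕ → U} (hninj : Function.Injective n) :
    ∀ x2 ∈ adom (G2set n), ∀ u c v : U, (u, c, v) ∈ G1set n →
      (hmap n x2 = u → ∃ c2 v2, (x2, c2, v2) ∈ G2set n ∧ hmap n c2 = c ∧ hmap n v2 = v) ∧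
      (hmap n x2 = c → ∃ u2 v2, (u2, x2, v2) ∈ G2set n ∧ hmap n u2 = u ∧ hmap n v2 = v) ∧
      (hmap n x2 = v → ∃ u2 c2, (u2, c2, x2) ∈ G2set n ∧ hmap n u2 = u ∧ hmap n c2 = c) := by
  obtain ⟨hm3, hm4, hm5, hm6, hm7, hm8, hm9, hm10, hm11⟩ := hmap_vals hninj
  intro x2 hx2 u c v htr
  have hx9 := adomG2_sub n hx2
  simp only [G1set, Set.mem_insert_iff, Set.mem_singleton_iff, Prod.mk.injEq] at htr
  have t1 : (n 3, n 9, n 7) ∈ G2set n := by simp [G2set]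
  have t2 : (n 3, n 10, n 5) ∈ G2set n := by simp [G2set]
  have t3 : (n 5, n 11, n 8) ∈ G2set n := by simp [G2set]
  have t4 : (n 4, n 9, n 8) ∈ G2set n := by simp [G2set]
  have t5 : (n 4, n 10, n 6) ∈ G2set n := by simp [G2set]
  have t6 : (n 6, n 11, n 7) ∈ G2set n := by simp [G2set]
  obtain ⟨rfl, rfl, rfl⟩ | ⟨rfl, rfl, rfl⟩ | ⟨rfl, rfl, rfl⟩ := htr <;>
    refine ⟨fun he => ?_, fun he => ?_, fun he => ?_⟩ <;>
      rcases hx9 with rfl | rfl | rfl | rfl | rfl | rfl | rfl | rfl | rfl <;>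
        simp only [hm3, hm4, hm5, hm6, hm7, hm8, hm9, hm10, hm11, hninj.eq_iff] at he <;>
          first
          | omega
          | exact ⟨n 9, n 7, t1, hm9, hm7⟩
          | exact ⟨n 9, n 8, t4, hm9, hm8⟩
          | exact ⟨n 3, n 7, t1, hm3, hm7⟩
          | exact ⟨n 3, n 9, t1, hm3, hm9⟩
          | exact ⟨n 4, n 9, t4, hm4, hm9⟩
          | exact ⟨n 10, n 5, t2, hm10, hm5⟩
          | exact ⟨n 10, n 6, t5, hm10, hm6⟩
          | exact ⟨n 3, n 5, t2, hm3, hm5⟩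
          | exact ⟨n 3, n 10, t2, hm3, hm10⟩
          | exact ⟨n 4, n 10, t5, hm4, hm10⟩
          | exact ⟨n 11, n 8, t3, hm11, hm8⟩
          | exact ⟨n 11, n 7, t6, hm11, hm7⟩
          | exact ⟨n 5, n 8, t3, hm5, hm8⟩
          | exact ⟨n 6, n 11, t6, hm6, hm11⟩
          | exact ⟨n 5, n 11, t3, hm5, hm11⟩

lemma cq_empty {n : ℕ → U} (hninj : Function.Injective n) :
    ∀ u v : U, (u, v) ∈ axisFwd (G2set n) .next →
      (u, v) ∈ rcomp (axisFwd (G2set n) .next) (axisFwd (G2set n) .next) → False := by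
  intro u v hd hp
  obtain ⟨c, hc⟩ := hd
  obtain ⟨w, ⟨c1, h1⟩, ⟨c2, h2⟩⟩ := hp
  simp only [G2set, Set.mem_insert_iff, Set.mem_singleton_iff, Prod.mk.injEq] at hc h1 h2
  rcases h1 with ⟨rfl, rfl, rfl⟩ | ⟨rfl, rfl, rfl⟩ | ⟨rfl, rfl, rfl⟩ | ⟨rfl, rfl, rfl⟩ |
    ⟨rfl, rfl, rfl⟩ | ⟨rfl, rfl, rfl⟩ <;>
    simp only [hninj.eq_iff] at h2 hc <;> simp_all [hninj.eq_iff]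

/-- CNRPQ is not expressible in NRPQ: no nested regular expression e
satisfies, for all RDF graphs G,
⟦(?x,e,?y)⟧_G = ⟦(?x,next,?y) ∧ (?x,next/next,?y)⟧_G,
where patterns evaluate to sets of mappings μ : {?x,?y} → U. -/
theorem cnrpq_not_expressible_in_nrpq {U : Type} [Infinite U] :
    ¬ ∃ e : NRE U, ∀ G : Set (U × U × U), G.Finite →
      {μ : QVar → U | (μ QVar.x, μ QVar.y) ∈ NRE.eval G e}
        = {μ : QVar → U | (μ QVar.x, μ QVar.y) ∈
            axisFwd G Axis.next ∩ rcomp (axisFwd G Axis.next) (axisFwd G Axis.next)} := by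
  rintro ⟨e, He⟩
  classical
  have hfin : ({c | c ∈ e.consts} : Set U).Finite := e.consts.finite_toSet
  have hinf : (({c | c ∈ e.consts} : Set U)ᶜ).Infinite := hfin.infinite_compl
  haveI := hinf.to_subtype
  let f : ℕ ↪ (({c | c ∈ e.consts} : Set U)ᶜ : Set U) := Infinite.natEmbedding _
  let n : ℕ → U := fun i => (f i : U)
  have hninj : Function.Injective n := fun i j hij => f.injective (Subtype.ext hij)
  have hnc : ∀ i, n i ∉ e.consts := fun i => (f i).2
  obtain ⟨hm3, hm4, hm5, hm6, hm7, hm8, hm9, hm10, hm11⟩ := hmap_vals hninj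
  have hG1fin : (G1set n).Finite := (Set.finite_singleton _).insert _ |>.insert _
  have hG2fin : (G2set n).Finite :=
    ((((Set.finite_singleton _).insert _).insert _).insert _).insert _ |>.insert _
  have E1 := He (G1set n) hG1fin
  have E2 := He (G2set n) hG2fin
  have hab : (n 0, n 2) ∈ NRE.eval (G1set n) e := by
    have hmem : (fun q => match q with | QVar.x => n 0 | QVar.y => n 2) ∈
        {μ : QVar → U | (μ QVar.x, μ QVar.y) ∈
          axisFwd (G1set n) Axis.next ∩
            rcomp (axisFwd (G1set n) Axis.next) (axisFwd (G1set n) Axis.next)} := by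
      refine ⟨⟨n 9, ?_⟩, n 1, ⟨n 10, ?_⟩, ⟨n 11, ?_⟩⟩ <;> simp [G1set]
    have := (Set.ext_iff.mp E1 _).mpr hmem
    exact this
  have hempty : ∀ u v : U, (u, v) ∉ NRE.eval (G2set n) e := by
    intro u v huv
    have hmem : (fun q => match q with | QVar.x => u | QVar.y => v) ∈
        {μ : QVar → U | (μ QVar.x, μ QVar.y) ∈ NRE.eval (G2set n) e} := huv
    have h2 := (Set.ext_iff.mp E2 _).mp hmem
    exact cq_empty hninj u v h2.1 h2.2
  have ha1 : n 3 ∈ adom (G2set n) :=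
    (adom_of_mem (show (n 3, n 9, n 7) ∈ G2set n by simp [G2set])).1
  have Hc : ∀ c ∈ e.consts, c ∉ adom (G1set n) := by
    intro c hc hcad
    rcases adomG1_sub n hcad with rfl | rfl | rfl | rfl | rfl | rfl <;> exact hnc _ hc
  obtain ⟨v2, _, _, hmem⟩ :=
    lift_eval (back hninj) e Hc (n 3) ha1 (n 2) (by rw [hm3]; exact hab)
  exact hempty _ _ hmem
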